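/- Let G be a simple graph with an interval representation, let {s_1,t_1},...,{s_k,t_k} be pairwise distinct (as unordered pairs) terminal pairs of distinct vertices with requirements r_1,...,r_k, and let P_1,...,P_l be a solution. Then for all indices i != j, there are no solution paths P_a, P_b joining s_i and t_i and a solution path P_c joining s_j and t_j, each with at least one inner vertex, such that the covered interval I_{P_c} lies between the covered intervals I_{P_a} and I_{P_b}. -/

import Mathlib

open SimpleGraph

variable {V : Type*}

/-- An interval representation of a simple graph: each vertex gets a closed real
interval `[l u, r u]` with `l u < r u`, and two distinct vertices are adjacent
iff their intervals intersect. -/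
structure IntervalRep (G : SimpleGraph V) where
  l : V → ℝ
  r : V → ℝ
  lt : ∀ u, l u < r u
  adj_iff : ∀ u v, u ≠ v →
    (G.Adj u v ↔ (Set.Icc (l u) (r u) ∩ Set.Icc (l v) (r v)).Nonempty)

/-- A path in `G` together with its two end-vertices. -/
structure IndexedPath (G : SimpleGraph V) where
  a : V
  b : V
  walk : G.Walk a b
  isPath : walk.IsPath

namespace IndexedPath

variable {G : SimpleGraph V}

/-- The set of end-vertices of the path. -/
def ends (P : IndexedPath G) : Set V := {P.a, P.b}

/-- `v` is an inner vertex of `P`, i.e. a vertex of `P` other than its ends. -/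
def IsInner (P : IndexedPath G) (v : V) : Prop :=
  v ∈ P.walk.support.tail.dropLast

/-- `P` has no inner chords: any edge between two of its vertices is either an
edge of the path itself or the edge between its two end-vertices. -/
def NoInnerChords (P : IndexedPath G) : Prop :=
  ∀ x y, x ∈ P.walk.support → y ∈ P.walk.support → G.Adj x y →
    s(x, y) ∈ P.walk.edges ∨ s(x, y) = s(P.a, P.b)

/-- `P` joins the vertices `x` and `y`. -/
def Joins (P : IndexedPath G) (x y : V) : Prop :=
  (P.a = x ∧ P.b = y) ∨ (P.a = y ∧ P.b = x)

end IndexedPath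

/-- A family of pairwise distinct paths is mutually induced if: (i) each path has
no inner chords; (ii) two distinct paths share only vertices that are ends of both;
(iii) no inner vertex of one path is adjacent to a vertex `v` of another path,
except when `v` is an end-vertex of both paths. -/
def MutuallyInduced {G : SimpleGraph V} {ι : Type*} (P : ι → IndexedPath G) : Prop :=
  (∀ i j, i ≠ j → P i ≠ P j) ∧
  (∀ i, (P i).NoInnerChords) ∧
  (∀ i j, i ≠ j → ∀ v, v ∈ (P i).walk.support → v ∈ (P j).walk.support →
      v ∈ (P i).ends ∧ v ∈ (P j).ends) ∧
  (∀ i j, i ≠ j → ∀ u v, (P i).IsInner u → v ∈ (P j).walk.support → G.Adj u v →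
      v ∈ (P i).ends ∧ v ∈ (P j).ends)

/-- The covered interval of a path: the union of the intervals of its inner vertices. -/
def coveredInterval {G : SimpleGraph V} (ρ : IntervalRep G) (P : IndexedPath G) : Set ℝ :=
  ⋃ v ∈ {w : V | P.IsInner w}, Set.Icc (ρ.l v) (ρ.r v)

/-- A solution to Requirement Induced Disjoint Paths: `l = r 1 + ... + r k`
mutually induced paths, exactly `r i` of which join `s i` and `t i`. -/
def RIDPSolution {G : SimpleGraph V} (k : ℕ) (s t : Fin k → V) (r : Fin k → ℕ)
    {l : ℕ} (P : Fin l → IndexedPath G) : Prop :=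
  l = ∑ i, r i ∧ MutuallyInduced P ∧
    ∀ i, Nat.card {j : Fin l // (P j).Joins (s i) (t i)} = r i

/-- `A` lies between `B` and `C`: every point of `B` is strictly smaller than every
point of `A`, and every point of `A` is strictly smaller than every point of `C`. -/
def LiesBetween (A B C : Set ℝ) : Prop :=
  (∀ x ∈ B, ∀ y ∈ A, x < y) ∧ (∀ y ∈ A, ∀ z ∈ C, y < z)

section Aux

variable {G : SimpleGraph V}

/-- The first end-vertex of a walk with an inner vertex is adjacent to an inner vertex. -/
lemma first_adj_aux : ∀ {u w : V} (p : G.Walk u w),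
    p.support.tail.dropLast ≠ [] → ∃ v ∈ p.support.tail.dropLast, G.Adj u v := by
  intro u w p hp
  cases p with
  | nil => simp [SimpleGraph.Walk.support] at hp
  | cons h q =>
    cases q with
    | nil => simp [SimpleGraph.Walk.support] at hp
    | cons h' q' =>
      refine ⟨_, ?_, h⟩
      simp only [SimpleGraph.Walk.support_cons, List.tail_cons,
        List.dropLast_cons_of_ne_nil (SimpleGraph.Walk.support_ne_nil q')]
      exact List.mem_cons_self

/-- The last end-vertex of a walk with an inner vertex is adjacent to an inner vertex. -/
lemma last_adj_aux : ∀ {u w : V} (p : G.Walk u w),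
    p.support.tail.dropLast ≠ [] → ∃ v ∈ p.support.tail.dropLast, G.Adj v w := by
  intro u w p
  induction p with
  | nil => simp [SimpleGraph.Walk.support]
  | @cons u c w h q ih =>
    intro hp
    cases q with
    | nil => simp [SimpleGraph.Walk.support] at hp
    | @cons c d _ h' q' =>
      cases q' with
      | nil =>
        exact ⟨c, by simp [SimpleGraph.Walk.support], h'⟩
      | @cons d e _ h'' q'' =>
        have hq : ((SimpleGraph.Walk.cons h' (SimpleGraph.Walk.cons h'' q'')).support.tail.dropLast
            ≠ []) := by
          simp only [SimpleGraph.Walk.support_cons, List.tail_cons,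
            List.dropLast_cons_of_ne_nil (SimpleGraph.Walk.support_ne_nil q'')]
          simp
        obtain ⟨v, hv, hadj⟩ := ih hq
        refine ⟨v, ?_, hadj⟩
        simp only [SimpleGraph.Walk.support_cons, List.tail_cons] at hv ⊢
        rw [List.dropLast_cons_of_ne_nil (by simp [SimpleGraph.Walk.support_cons])]
        exact List.mem_cons_of_mem _ hv

/-- An end of a path with an inner vertex has an interval meeting the covered interval. -/
lemma end_meets_covered (ρ : IntervalRep G) (Q : IndexedPath G) (x : V)
    (hx : x = Q.a ∨ x = Q.b) (hinn : ∃ v, Q.IsInner v) :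
    ∃ p, p ∈ Set.Icc (ρ.l x) (ρ.r x) ∧ p ∈ coveredInterval ρ Q := by
  obtain ⟨v0, hv0⟩ := hinn
  have hne : Q.walk.support.tail.dropLast ≠ [] := List.ne_nil_of_mem hv0
  have key : ∃ v ∈ Q.walk.support.tail.dropLast, G.Adj x v := by
    rcases hx with rfl | rfl
    · exact first_adj_aux Q.walk hne
    · obtain ⟨v, hv, hadj⟩ := last_adj_aux Q.walk hne
      exact ⟨v, hv, hadj.symm⟩
  obtain ⟨v, hv, hadj⟩ := key
  obtain ⟨p, hp1, hp2⟩ := (ρ.adj_iff x v hadj.ne).mp hadj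
  exact ⟨p, hp1, Set.mem_biUnion (show v ∈ {w : V | Q.IsInner w} from hv) hp2⟩

/-- A `Joins` determines the unordered pair of ends. -/
lemma joins_sym2 {Q : IndexedPath G} {x y : V} (h : Q.Joins x y) :
    s(Q.a, Q.b) = s(x, y) := by
  rcases h with ⟨h1, h2⟩ | ⟨h1, h2⟩ <;> rw [h1, h2]
  exact Sym2.eq_swap

end Aux

/-- in a solution, no covered interval of a solution path for one
terminal pair lies between the covered intervals of two solution paths for a
different terminal pair. -/
theorem statement4 {V : Type*} (G : SimpleGraph V) (ρ : IntervalRep G)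
    (k : ℕ) (s t : Fin k → V) (r : Fin k → ℕ)
    (hst : ∀ i, s i ≠ t i)
    (hpairs : ∀ i j, i ≠ j → s(s i, t i) ≠ s(s j, t j))
    (hr : ∀ i, 0 < r i)
    (l : ℕ) (P : Fin l → IndexedPath G)
    (hsol : RIDPSolution k s t r P)
    (i j : Fin k) (hij : i ≠ j) :
    ¬ ∃ a b c : Fin l, a ≠ b ∧
        (P a).Joins (s i) (t i) ∧ (P b).Joins (s i) (t i) ∧
        (P c).Joins (s j) (t j) ∧
        (∃ v, (P a).IsInner v) ∧ (∃ v, (P b).IsInner v) ∧ (∃ v, (P c).IsInner v) ∧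
        LiesBetween (coveredInterval ρ (P c))
          (coveredInterval ρ (P a)) (coveredInterval ρ (P b)) := by
  rintro ⟨a, b, c, hab, hJa, hJb, hJc, hInnA, hInnB, ⟨vc, hvc⟩, hBet⟩
  obtain ⟨-, hMI, -⟩ := hsol
  obtain ⟨-, -, hShare, hAdjMI⟩ := hMI
  -- c differs from a and b as indices
  have hca : c ≠ a := by
    rintro rfl
    exact hpairs i j hij ((joins_sym2 hJa).symm.trans (joins_sym2 hJc))
  -- a fixed point of the covered interval of P c
  have hyc : ρ.l vc ∈ coveredInterval ρ (P c) :=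
    Set.mem_biUnion (show vc ∈ {w : V | (P c).IsInner w} from hvc)
      (Set.left_mem_Icc.mpr (ρ.lt vc).le)
  -- the key claim: every terminal of pair i is an end of P c
  have key : ∀ x : V, (x = (P a).a ∨ x = (P a).b) → (x = (P b).a ∨ x = (P b).b) →
      x ∈ (P c).ends := by
    intro x hxa hxb
    obtain ⟨p1, hp1x, hp1A⟩ := end_meets_covered ρ (P a) x hxa hInnA
    obtain ⟨p2, hp2x, hp2B⟩ := end_meets_covered ρ (P b) x hxb hInnB
    have h1 : p1 < ρ.l vc := hBet.1 p1 hp1A _ hyc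
    have h2 : ρ.l vc < p2 := hBet.2 _ hyc p2 hp2B
    have hyx : ρ.l vc ∈ Set.Icc (ρ.l x) (ρ.r x) :=
      ⟨hp1x.1.trans h1.le, h2.le.trans hp2x.2⟩
    have hxsuppA : x ∈ (P a).walk.support := by
      rcases hxa with rfl | rfl
      · exact (P a).walk.start_mem_support
      · exact (P a).walk.end_mem_support
    by_cases hxvc : x = vc
    · subst hxvc
      have hxsuppC : x ∈ (P c).walk.support :=
        List.tail_subset _ (List.dropLast_subset _ hvc)
      exact (hShare a c (fun h => hca h.symm) x hxsuppA hxsuppC).2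
    · have hadj : G.Adj vc x := by
        refine ((ρ.adj_iff vc x (fun h => hxvc h.symm)).mpr ?_).symm.symm
        exact ⟨ρ.l vc, Set.left_mem_Icc.mpr (ρ.lt vc).le, hyx⟩
      exact (hAdjMI c a hca vc x hvc hxsuppA hadj).1
  -- both terminals of pair i are in {s j, t j}
  have joins_end : ∀ (d : Fin l), (P d).Joins (s i) (t i) →
      ∀ x : V, x ∈ ({s i, t i} : Set V) → x = (P d).a ∨ x = (P d).b := by
    intro d hd x hx
    simp only [Set.mem_insert_iff, Set.mem_singleton_iff] at hx
    rcases hd with ⟨h1, h2⟩ | ⟨h1, h2⟩ <;> rcases hx with h | h <;> subst h <;>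
      first
        | exact Or.inl h1.symm
        | exact Or.inr h2.symm
  have hsi : s i ∈ (P c).ends :=
    key (s i) (joins_end a hJa _ (Set.mem_insert _ _))
      (joins_end b hJb _ (Set.mem_insert _ _))
  have hti : t i ∈ (P c).ends :=
    key (t i) (joins_end a hJa _ (Set.mem_insert_of_mem _ rfl))
      (joins_end b hJb _ (Set.mem_insert_of_mem _ rfl))
  -- ends of P c are {s j, t j}
  have hc2 : s((P c).a, (P c).b) = s(s j, t j) := joins_sym2 hJc
  have hends : ((P c).a = s j ∧ (P c).b = t j) ∨ ((P c).a = t j ∧ (P c).b = s j) :=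
    Sym2.eq_iff.mp hc2
  have hsi2 : s i = (P c).a ∨ s i = (P c).b := by
    simpa [IndexedPath.ends, Set.mem_insert_iff] using hsi
  have hti2 : t i = (P c).a ∨ t i = (P c).b := by
    simpa [IndexedPath.ends, Set.mem_insert_iff] using hti
  apply hpairs i j hij
  rw [Sym2.eq_iff]
  rcases hends with ⟨e1, e2⟩ | ⟨e1, e2⟩ <;> rcases hsi2 with f1 | f1 <;>
      rcases hti2 with f2 | f2 <;>
    first
      | exact absurd (f1.trans f2.symm) (hst i)
      | exact Or.inl ⟨f1.trans e1, f2.trans e2⟩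
      | exact Or.inr ⟨f1.trans e2, f2.trans e1⟩
      | exact Or.inr ⟨f1.trans e1, f2.trans e2⟩
      | exact Or.inl ⟨f1.trans e2, f2.trans e1⟩
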